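/- arXiv:2407.14074 — 2 statements merged into one kernel-verified Lean document; each statement's English description precedes it below -/
import Mathlib

section
/- Let π_1,...,π_K be positive reals summing to 1, and let g_1,...,g_K be square-integrable mean-zero random variables. Define the K×K matrix M with diagonal entries M_{kk} = ((1−π_k)/π_k)·E[g_k²] and off-diagonal entries M_{kℓ} = −E[g_k g_ℓ]. Then M is positive semidefinite. -/
open MeasureTheory

private lemma memLp_integrable_mul {Ω : Type*} [MeasurableSpace Ω] {μ : Measure Ω}
    {f h : Ω → ℝ} (hf : MemLp f 2 μ) (hh : MemLp h 2 μ) :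
    Integrable (fun ω => f ω * h ω) μ := by
  have hint : Integrable (fun ω => (1/2 : ℝ) * (f ω ^ 2 + h ω ^ 2)) μ :=
    (hf.integrable_sq.add hh.integrable_sq).const_mul _
  refine Integrable.mono' hint (hf.1.mul hh.1) ?_
  filter_upwards with ω
  rw [Real.norm_eq_abs, abs_mul]
  nlinarith [sq_nonneg (|f ω| - |h ω|), sq_abs (f ω), sq_abs (h ω), abs_nonneg (f ω),
    abs_nonneg (h ω)]

theorem stmt_8 {Ω : Type*} [MeasurableSpace Ω] (μ : Measure Ω) [IsProbabilityMeasure μ]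
    (K : ℕ) (hK : 0 < K) (g : Fin K → Ω → ℝ)
    (hg : ∀ k, MemLp (g k) 2 μ) (hmean : ∀ k, ∫ ω, g k ω ∂μ = 0)
    (π : Fin K → ℝ) (hπ : ∀ k, 0 < π k) (hsum : ∑ k, π k = 1) :
    (Matrix.of fun k ℓ : Fin K =>
      if k = ℓ then ((1 - π k) / π k) * ∫ ω, (g k ω) ^ 2 ∂μ
      else -∫ ω, g k ω * g ℓ ω ∂μ).PosSemidef := by
  set I : Fin K → Fin K → ℝ := fun k ℓ => ∫ ω, g k ω * g ℓ ω ∂μ with hI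
  have hIsymm : ∀ k ℓ, I k ℓ = I ℓ k := by
    intro k ℓ; simp only [hI]; congr 1; ext ω; ring
  have hIdiag : ∀ k, I k k = ∫ ω, (g k ω) ^ 2 ∂μ := by
    intro k; simp only [hI]; congr 1; ext ω; ring
  set M : Matrix (Fin K) (Fin K) ℝ := Matrix.of fun k ℓ : Fin K =>
      if k = ℓ then ((1 - π k) / π k) * ∫ ω, (g k ω) ^ 2 ∂μ
      else -∫ ω, g k ω * g ℓ ω ∂μ with hM
  have entry : ∀ k ℓ, M k ℓ
      = (if k = ℓ then (1 / π k) * ∫ ω, (g k ω) ^ 2 ∂μ else 0) - I k ℓ := by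
    intro k ℓ
    simp only [hM, Matrix.of_apply]
    by_cases h : k = ℓ
    · subst h
      simp only [if_pos rfl, hIdiag]
      have := (hπ k).ne'
      field_simp
      simp only [↓reduceIte]
      field_simp
    · simp [if_neg h, hI]
  rw [Matrix.posSemidef_iff_dotProduct_mulVec]
  constructor
  · -- Hermitian
    ext k ℓ
    simp only [Matrix.conjTranspose_apply, RCLike.star_def, starRingEnd_apply, star_trivial]
    rw [entry, entry, hIsymm]
    by_cases h : k = ℓ
    · subst h; rfl
    · simp [h, Ne.symm h]
  · intro x
    have hstar : star x = x := rfl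
    rw [hstar]
    -- expand quadratic form
    have expand : dotProduct x (M.mulVec x)
        = (∑ k, x k ^ 2 * ((1 / π k) * ∫ ω, (g k ω) ^ 2 ∂μ))
          - ∑ k, ∑ ℓ, x k * x ℓ * I k ℓ := by
      simp only [dotProduct, Matrix.mulVec, dotProduct]
      rw [← Finset.sum_sub_distrib]
      refine Finset.sum_congr rfl fun k _ => ?_
      have : x k ^ 2 * ((1 / π k) * ∫ ω, (g k ω) ^ 2 ∂μ)
          = ∑ ℓ, x k * ((if k = ℓ then (1 / π k) * ∫ ω, (g k ω) ^ 2 ∂μ else 0) * x ℓ) := by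
        rw [Finset.sum_eq_single k]
        · simp; ring
        · intro b _ hb; simp [Ne.symm hb]
        · simp
      rw [Finset.mul_sum, this, ← Finset.sum_sub_distrib]
      refine Finset.sum_congr rfl fun ℓ _ => ?_
      rw [entry]
      ring
    rw [expand]
    -- the double sum is the integral of the square of the weighted sum
    set S : Ω → ℝ := fun ω => ∑ k, x k * g k ω with hS
    have hSmem : MemLp S 2 μ := by
      apply memLp_finsetSum
      intro k _
      exact (hg k).const_mul (x k)
    have hdouble : ∑ k, ∑ ℓ, x k * x ℓ * I k ℓ = ∫ ω, (S ω) ^ 2 ∂μ := by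
      have : ∀ ω, (S ω) ^ 2 = ∑ k, ∑ ℓ, x k * x ℓ * (g k ω * g ℓ ω) := by
        intro ω
        simp only [hS, sq, Finset.sum_mul_sum]
        refine Finset.sum_congr rfl fun k _ => Finset.sum_congr rfl fun ℓ _ => by ring
      simp_rw [this]
      rw [integral_finset_sum]
      · refine Finset.sum_congr rfl fun k _ => ?_
        rw [integral_finset_sum]
        · refine Finset.sum_congr rfl fun ℓ _ => ?_
          rw [integral_const_mul]
        · intro ℓ _
          exact ((memLp_integrable_mul (hg k) (hg ℓ))).const_mul _
      · intro k _
        apply integrable_finset_sum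
        intro ℓ _
        exact ((memLp_integrable_mul (hg k) (hg ℓ))).const_mul _
    rw [hdouble]
    -- pointwise Cauchy-Schwarz
    have hpt : ∀ ω, (S ω) ^ 2 ≤ ∑ k, x k ^ 2 / π k * (g k ω) ^ 2 := by
      intro ω
      have hcs := Finset.sum_mul_sq_le_sq_mul_sq Finset.univ
        (fun k => Real.sqrt (π k)) (fun k => x k * g k ω / Real.sqrt (π k))
      have hsq : ∀ k : Fin K, Real.sqrt (π k) * (x k * g k ω / Real.sqrt (π k))
          = x k * g k ω := by
        intro k
        field_simp [Real.sqrt_ne_zero'.2 (hπ k)]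
      have h1 : ∑ k, (Real.sqrt (π k)) ^ 2 = 1 := by
        rw [← hsum]
        exact Finset.sum_congr rfl fun k _ => Real.sq_sqrt (hπ k).le
      have h2 : ∀ k : Fin K, (x k * g k ω / Real.sqrt (π k)) ^ 2
          = x k ^ 2 / π k * (g k ω) ^ 2 := by
        intro k
        rw [div_pow, Real.sq_sqrt (hπ k).le]
        ring
      calc (S ω) ^ 2 = (∑ k, Real.sqrt (π k) * (x k * g k ω / Real.sqrt (π k))) ^ 2 := by
            simp only [hS]
            congr 1
            exact (Finset.sum_congr rfl fun k _ => (hsq k)).symm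
        _ ≤ (∑ k, (Real.sqrt (π k)) ^ 2) * ∑ k, (x k * g k ω / Real.sqrt (π k)) ^ 2 := hcs
        _ = ∑ k, x k ^ 2 / π k * (g k ω) ^ 2 := by
            rw [h1, one_mul]
            exact Finset.sum_congr rfl fun k _ => h2 k
    have hint : ∫ ω, (S ω) ^ 2 ∂μ ≤ ∑ k, x k ^ 2 * ((1 / π k) * ∫ ω, (g k ω) ^ 2 ∂μ) := by
      have : ∑ k, x k ^ 2 * ((1 / π k) * ∫ ω, (g k ω) ^ 2 ∂μ)
          = ∫ ω, ∑ k, x k ^ 2 / π k * (g k ω) ^ 2 ∂μ := by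
        rw [integral_finset_sum]
        · refine Finset.sum_congr rfl fun k _ => ?_
          rw [integral_const_mul]
          ring
        · intro k _
          exact (hg k).integrable_sq.const_mul _
      rw [this]
      refine integral_mono_of_nonneg ?_ ?_ ?_
      · filter_upwards with ω; positivity
      · apply integrable_finset_sum
        intro k _
        exact (hg k).integrable_sq.const_mul _
      · filter_upwards with ω
        exact hpt ω
    linarith
end

section
/- Let g_1, g_2 be square-integrable random variables and π_1, π_2 > 0. If Var(g_1·π_2 − g_2·π_1) > 0 and similarly for all scalar combinations (i.e., g_1 and g_2 are not almost-surely linearly dependent), then for every nonzero (v_1, v_2) ∈ ℝ², v_1² Var(g_1)/π_1 + v_2² Var(g_2)/π_2 > Var(v_1 g_1 + v_2 g_2) whenever π_1 + π_2 ≤ 1. -/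
open MeasureTheory

theorem stmt_19 {Ω : Type*} [MeasurableSpace Ω] (μ : Measure Ω) [IsProbabilityMeasure μ]
    (g₁ g₂ : Ω → ℝ) (hg₁ : MemLp g₁ 2 μ) (hg₂ : MemLp g₂ 2 μ)
    (hmean₁ : ∫ ω, g₁ ω ∂μ = 0) (hmean₂ : ∫ ω, g₂ ω ∂μ = 0)
    (π₁ π₂ : ℝ) (hπ₁ : 0 < π₁) (hπ₂ : 0 < π₂) (hπsum : π₁ + π₂ ≤ 1)
    (hdep : ∀ r : ℝ, 0 < (∫ ω, (g₁ ω - r * g₂ ω) ^ 2 ∂μ)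
      - (∫ ω, (g₁ ω - r * g₂ ω) ∂μ) ^ 2)
    (hvar₂ : 0 < (∫ ω, (g₂ ω) ^ 2 ∂μ) - (∫ ω, g₂ ω ∂μ) ^ 2) :
    ∀ v₁ v₂ : ℝ, (v₁, v₂) ≠ (0, 0) →
      ((∫ ω, (v₁ * g₁ ω + v₂ * g₂ ω) ^ 2 ∂μ)
          - (∫ ω, (v₁ * g₁ ω + v₂ * g₂ ω) ∂μ) ^ 2)
        < v₁ ^ 2 * ((∫ ω, (g₁ ω) ^ 2 ∂μ) - (∫ ω, g₁ ω ∂μ) ^ 2) / π₁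
          + v₂ ^ 2 * ((∫ ω, (g₂ ω) ^ 2 ∂μ) - (∫ ω, g₂ ω ∂μ) ^ 2) / π₂ := by
  intro v₁ v₂ hv
  have hint1 : Integrable g₁ μ := hg₁.integrable (by norm_num)
  have hint2 : Integrable g₂ μ := hg₂.integrable (by norm_num)
  have hsq1 : Integrable (fun ω => g₁ ω ^ 2) μ := hg₁.integrable_sq
  have hsq2 : Integrable (fun ω => g₂ ω ^ 2) μ := hg₂.integrable_sq
  have hsq12 : Integrable (fun ω => (g₁ ω + g₂ ω) ^ 2) μ := (hg₁.add hg₂).integrable_sq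
  have hmul : Integrable (fun ω => g₁ ω * g₂ ω) μ := by
    have : (fun ω => g₁ ω * g₂ ω)
        = fun ω => ((g₁ ω + g₂ ω) ^ 2 - g₁ ω ^ 2 - g₂ ω ^ 2) / 2 := by
      funext ω; ring
    rw [this]
    exact ((hsq12.sub hsq1).sub hsq2).div_const 2
  set V₁ := ∫ ω, g₁ ω ^ 2 ∂μ with hV₁def
  set V₂ := ∫ ω, g₂ ω ^ 2 ∂μ with hV₂def
  set C := ∫ ω, g₁ ω * g₂ ω ∂μ with hCdef
  have expand : ∀ s t : ℝ, (∫ ω, (s * g₁ ω + t * g₂ ω) ^ 2 ∂μ)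
      = s ^ 2 * V₁ + 2 * s * t * C + t ^ 2 * V₂ := by
    intro s t
    have h1 : (fun ω => (s * g₁ ω + t * g₂ ω) ^ 2)
        = fun ω => s ^ 2 * g₁ ω ^ 2 + (2 * s * t) * (g₁ ω * g₂ ω) + t ^ 2 * g₂ ω ^ 2 := by
      funext ω; ring
    have hA : Integrable (fun ω => s ^ 2 * g₁ ω ^ 2 + 2 * s * t * (g₁ ω * g₂ ω)) μ :=
      (hsq1.const_mul _).add (hmul.const_mul _)
    have hB : Integrable (fun ω => t ^ 2 * g₂ ω ^ 2) μ := hsq2.const_mul _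
    rw [h1, integral_add hA hB, integral_add (hsq1.const_mul _) (hmul.const_mul _),
      integral_const_mul, integral_const_mul, integral_const_mul]
  have meanlin : ∀ s t : ℝ, (∫ ω, (s * g₁ ω + t * g₂ ω) ∂μ) = 0 := by
    intro s t
    have hA : Integrable (fun ω => s * g₁ ω) μ := hint1.const_mul _
    have hB : Integrable (fun ω => t * g₂ ω) μ := hint2.const_mul _
    rw [integral_add hA hB, integral_const_mul, integral_const_mul, hmean₁, hmean₂]
    ring
  have hdep' : ∀ r : ℝ, 0 < V₁ - 2 * r * C + r ^ 2 * V₂ := by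
    intro r
    have h := hdep r
    have e1 : (fun ω => (g₁ ω - r * g₂ ω) ^ 2)
        = fun ω => (1 * g₁ ω + (-r) * g₂ ω) ^ 2 := by funext ω; ring
    have e2 : (fun ω => (g₁ ω - r * g₂ ω))
        = fun ω => (1 * g₁ ω + (-r) * g₂ ω) := by funext ω; ring
    rw [e1, e2, expand, meanlin] at h
    nlinarith [h]
  have hV2pos : 0 < V₂ := by
    rw [hmean₂] at hvar₂; nlinarith [hvar₂]
  have hV1pos : 0 < V₁ := by nlinarith [hdep' 0]
  -- key inequality (cleared of denominators)
  have key : 0 < v₁ ^ 2 * π₂ ^ 2 * V₁ - 2 * v₁ * v₂ * π₁ * π₂ * C + v₂ ^ 2 * π₁ ^ 2 * V₂ := by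
    rcases eq_or_ne v₁ 0 with h1 | h1
    · have h2 : v₂ ≠ 0 := by
        intro h2; exact hv (by simp [h1, h2])
      have : 0 < v₂ ^ 2 * π₁ ^ 2 * V₂ := by positivity
      rw [h1]; nlinarith [this]
    · have hr := hdep' (v₂ * π₁ / (v₁ * π₂))
      have hpos : (0:ℝ) < v₁ ^ 2 * π₂ ^ 2 := by positivity
      have heq : v₁ ^ 2 * π₂ ^ 2 * (V₁ - 2 * (v₂ * π₁ / (v₁ * π₂)) * C
          + (v₂ * π₁ / (v₁ * π₂)) ^ 2 * V₂)
          = v₁ ^ 2 * π₂ ^ 2 * V₁ - 2 * v₁ * v₂ * π₁ * π₂ * C + v₂ ^ 2 * π₁ ^ 2 * V₂ := by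
        field_simp
      calc (0:ℝ) < v₁ ^ 2 * π₂ ^ 2 * (V₁ - 2 * (v₂ * π₁ / (v₁ * π₂)) * C
          + (v₂ * π₁ / (v₁ * π₂)) ^ 2 * V₂) := by positivity
        _ = _ := heq
  rw [expand, meanlin, hmean₁, hmean₂]
  rw [div_add_div _ _ (ne_of_gt hπ₁) (ne_of_gt hπ₂), lt_div_iff₀ (mul_pos hπ₁ hπ₂)]
  nlinarith [key, mul_nonneg (mul_nonneg (sq_nonneg v₁) hV1pos.le) (mul_nonneg hπ₂.le (by linarith : (0:ℝ) ≤ 1 - π₁ - π₂)),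
    mul_nonneg (mul_nonneg (sq_nonneg v₂) hV2pos.le) (mul_nonneg hπ₁.le (by linarith : (0:ℝ) ≤ 1 - π₁ - π₂))]
end
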